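/- arXiv:2309.08224 — 2 statements merged into one kernel-verified Lean document; each statement's English description precedes it below -/
import Mathlib

section
/- Let H : ℝ → ℝ be continuous and coercive and F0 : ℝ → ℝ be continuous, non-increasing and semi-coercive. Then at every point p with F0(p) = H(p) one has (R̲F0)(p) = (R̄F0)(p) = F0(p), so the relaxation ℜF0 is well-defined; moreover ℜF0 is continuous, non-increasing and semi-coercive, and ℜF0 = R̄(R̲F0) = R̲(R̄F0). -/
open Set Filter

attribute [local instance] Classical.propDecidable

noncomputable section

/-- `H` is coercive: `H p → +∞` as `|p| → +∞`. -/
def Coercive (H : ℝ → ℝ) : Prop := Tendsto H (cocompact ℝ) atTop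

/-- `F` is semi-coercive: `F p → +∞` as `p → -∞`. -/
def SemiCoercive (F : ℝ → ℝ) : Prop := Tendsto F atBot atTop

/-- Sub-relaxation: `(R̲F)(p) = sup_{q ≥ p} min (F q) (H q)`. -/
def subR (H F : ℝ → ℝ) (p : ℝ) : ℝ := sSup ((fun q => min (F q) (H q)) '' Ici p)

/-- Super-relaxation: `(R̄F)(p) = inf_{q ≤ p} max (F q) (H q)`. -/
def supR (H F : ℝ → ℝ) (p : ℝ) : ℝ := sInf ((fun q => max (F q) (H q)) '' Iic p)

/-- Relaxation operator: `R̲F` where `F ≥ H`, `R̄F` where `F ≤ H`. -/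
def relax (H F : ℝ → ℝ) (p : ℝ) : ℝ := if H p ≤ F p then subR H F p else supR H F p

/-- `p` is a negative characteristic point of `F` relative to `H`. -/
def negChar (H F : ℝ → ℝ) (p : ℝ) : Prop :=
  H p = F p ∧ ∃ ε > 0, ∀ q ∈ Ioo (p - ε) p, H q < H p

/-- `p` is a positive characteristic point of `F` relative to `H`. -/
def posChar (H F : ℝ → ℝ) (p : ℝ) : Prop :=
  H p = F p ∧ ∃ ε > 0, ∀ q ∈ Ioo p (p + ε), H p < H q

/-- The upper point `p⁺ ∈ ℝ ∪ {+∞}` associated with `p` and `H`. -/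
def upperPt (H : ℝ → ℝ) (p : ℝ) : EReal :=
  if ∀ ε > 0, ∃ q, p < q ∧ q < p + ε ∧ H q ≤ H p then (p : EReal)
  else sSup ((fun q : ℝ => (q : EReal)) '' {q : ℝ | p < q ∧ ∀ r ∈ Ioo p q, H p < H r})

/-- The lower point `p⁻` associated with `p` and `H`. -/
def lowerPt (H : ℝ → ℝ) (p : ℝ) : ℝ :=
  if ∀ ε > 0, ∃ q, p - ε < q ∧ q < p ∧ H p ≤ H q then p
  else sInf {q : ℝ | q < p ∧ ∀ r ∈ Ioo q p, H r < H p}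

/-- `p` is a positive limiter point of `F`. -/
def posLimiter (H F : ℝ → ℝ) (p : ℝ) : Prop :=
  (p : EReal) < upperPt H p ∧ F p ≤ H p ∧
    ∀ q : ℝ, H q < H p → F q ≤ H q →
      {r : ℝ | lowerPt H q < r ∧ (r : EReal) < upperPt H q} ∩
        {r : ℝ | p < r ∧ (r : EReal) < upperPt H p} = ∅

/-- `p` is a negative limiter point of `F`. -/
def negLimiter (H F : ℝ → ℝ) (p : ℝ) : Prop :=
  lowerPt H p < p ∧ H p ≤ F p ∧
    ∀ q : ℝ, H q ≤ F q → H p < H q →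
      {r : ℝ | lowerPt H q < r ∧ (r : EReal) < upperPt H q} ∩ Ioo (lowerPt H p) p = ∅

/-- The Godunov flux associated with `H`. -/
def godunov (H : ℝ → ℝ) (q p : ℝ) : ℝ :=
  if p ≤ q then sSup (H '' Icc p q) else sInf (H '' Icc q p)

/-- The lower (set-valued) Godunov semi-flux `G̲(q,p)`, as a subset of the extended reals. -/
def subG (H : ℝ → ℝ) (q p : ℝ) : Set EReal :=
  if q < p then {⊥}
  else if q = p then Iic ((H p : ℝ) : EReal)
  else {((godunov H q p : ℝ) : EReal)}

/-- The upper (set-valued) Godunov semi-flux `Ḡ(q,p)`, as a subset of the extended reals. -/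
def supG (H : ℝ → ℝ) (q p : ℝ) : Set EReal :=
  if q < p then {((godunov H q p : ℝ) : EReal)}
  else if q = p then Ici ((H p : ℝ) : EReal)
  else {⊤}

section MyAux


lemma cont_sSup_Ici (g : ℝ → ℝ) (hg : Continuous g) (hb : ∀ p, BddAbove (g '' Ici p)) :
    Continuous fun p => sSup (g '' Ici p) := by
  set f : ℝ → ℝ := fun p => sSup (g '' Ici p) with hfdef
  have hne : ∀ p : ℝ, (g '' Ici p).Nonempty := fun p => ⟨g p, mem_image_of_mem _ self_mem_Ici⟩
  have hmem : ∀ p q : ℝ, p ≤ q → g q ≤ f p := fun p q hpq => le_csSup (hb p) (mem_image_of_mem _ hpq)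
  have hanti : Antitone f := fun p q hpq =>
    csSup_le_csSup (hb p) (hne q) (image_mono (Ici_subset_Ici.2 hpq))
  rw [continuous_iff_continuousAt]
  intro p
  rw [Metric.continuousAt_iff]
  intro ε hε
  obtain ⟨δ₁, hδ₁, hδ₁'⟩ := Metric.continuousAt_iff.1 hg.continuousAt (ε/2) (by linarith)
  have h1 : ∃ δ₂ > 0, f p - ε < f (p + δ₂) := by
    obtain ⟨x, ⟨r, hr, rfl⟩, hx⟩ := exists_lt_of_lt_csSup (hne p) (show f p - ε < f p by linarith)
    rcases lt_or_eq_of_le (mem_Ici.mp hr) with h | h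
    · refine ⟨r - p, by linarith, ?_⟩
      have : g r ≤ f (p + (r - p)) := hmem _ _ (by linarith)
      linarith
    · subst h
      have hc : (0:ℝ) < g p - (f p - ε) := by linarith
      obtain ⟨δ, hδ, hδ'⟩ := Metric.continuousAt_iff.1 hg.continuousAt _ hc
      refine ⟨δ/2, by linarith, ?_⟩
      have hd : dist (p + δ/2) p < δ := by
        rw [Real.dist_eq]; rw [abs_of_nonneg (by linarith)]; linarith
      have := hδ' hd
      rw [Real.dist_eq, abs_sub_lt_iff] at this
      have h2 : g (p + δ/2) ≤ f (p + δ/2) := hmem _ _ le_rfl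
      linarith [this.2]
  obtain ⟨δ₂, hδ₂, hδ₂'⟩ := h1
  refine ⟨min δ₁ δ₂, lt_min hδ₁ hδ₂, ?_⟩
  intro q hq
  rw [Real.dist_eq] at hq
  have hq1 : |q - p| < δ₁ := lt_of_lt_of_le hq (min_le_left _ _)
  have hq2 : |q - p| < δ₂ := lt_of_lt_of_le hq (min_le_right _ _)
  rw [abs_sub_lt_iff] at hq1 hq2
  have hub : f q ≤ f p + ε/2 := by
    apply csSup_le (hne q)
    rintro x ⟨r, (hr : q ≤ r), rfl⟩
    by_cases hrp : p ≤ r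
    · have := hmem p r hrp; linarith
    · push_neg at hrp
      have hd : dist r p < δ₁ := by
        rw [Real.dist_eq, abs_of_nonpos (by linarith)]
        linarith [hq1.2]
      have := hδ₁' hd
      rw [Real.dist_eq, abs_sub_lt_iff] at this
      have hgp : g p ≤ f p := hmem p p le_rfl
      linarith [this.1]
  have hlb : f p - ε < f q := lt_of_lt_of_le hδ₂' (hanti (by linarith [hq2.1] : q ≤ p + δ₂))
  rw [Real.dist_eq, abs_sub_lt_iff]
  constructor <;> linarith

lemma cont_sInf_Iic (g : ℝ → ℝ) (hg : Continuous g) (hb : ∀ p, BddBelow (g '' Iic p)) :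
    Continuous fun p => sInf (g '' Iic p) := by
  set f : ℝ → ℝ := fun p => sInf (g '' Iic p) with hfdef
  have hne : ∀ p : ℝ, (g '' Iic p).Nonempty := fun p => ⟨g p, mem_image_of_mem _ self_mem_Iic⟩
  have hmem : ∀ p q : ℝ, q ≤ p → f p ≤ g q := fun p q hpq => csInf_le (hb p) (mem_image_of_mem _ hpq)
  have hanti : Antitone f := fun p q hpq =>
    csInf_le_csInf (hb q) (hne p) (image_mono (Iic_subset_Iic.2 hpq))
  rw [continuous_iff_continuousAt]
  intro p
  rw [Metric.continuousAt_iff]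
  intro ε hε
  obtain ⟨δ₁, hδ₁, hδ₁'⟩ := Metric.continuousAt_iff.1 hg.continuousAt (ε/2) (by linarith)
  have h1 : ∃ δ₂ > 0, f (p - δ₂) < f p + ε := by
    obtain ⟨x, ⟨r, hr, rfl⟩, hx⟩ := exists_lt_of_csInf_lt (hne p) (show f p < f p + ε by linarith)
    rcases lt_or_eq_of_le (mem_Iic.mp hr) with h | h
    · refine ⟨p - r, by linarith, ?_⟩
      have : f (p - (p - r)) ≤ g r := hmem _ _ (by linarith)
      linarith
    · subst h
      have hc : (0:ℝ) < (f r + ε) - g r := by linarith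
      obtain ⟨δ, hδ, hδ'⟩ := Metric.continuousAt_iff.1 hg.continuousAt _ hc
      refine ⟨δ/2, by linarith, ?_⟩
      have hd : dist (r - δ/2) r < δ := by
        rw [Real.dist_eq]; rw [abs_of_nonpos (by linarith)]; linarith
      have := hδ' hd
      rw [Real.dist_eq, abs_sub_lt_iff] at this
      have h2 : f (r - δ/2) ≤ g (r - δ/2) := hmem _ _ le_rfl
      linarith [this.1]
  obtain ⟨δ₂, hδ₂, hδ₂'⟩ := h1
  refine ⟨min δ₁ δ₂, lt_min hδ₁ hδ₂, ?_⟩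
  intro q hq
  rw [Real.dist_eq] at hq
  have hq1 : |q - p| < δ₁ := lt_of_lt_of_le hq (min_le_left _ _)
  have hq2 : |q - p| < δ₂ := lt_of_lt_of_le hq (min_le_right _ _)
  rw [abs_sub_lt_iff] at hq1 hq2
  have hlb : f p - ε/2 ≤ f q := by
    apply le_csInf (hne q)
    rintro x ⟨r, (hr : r ≤ q), rfl⟩
    by_cases hrp : r ≤ p
    · have := hmem p r hrp; linarith
    · push_neg at hrp
      have hd : dist r p < δ₁ := by
        rw [Real.dist_eq, abs_of_nonneg (by linarith)]
        linarith [hq1.1]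
      have := hδ₁' hd
      rw [Real.dist_eq, abs_sub_lt_iff] at this
      have hgp : f p ≤ g p := hmem p p le_rfl
      linarith [this.2]
  have hub : f q < f p + ε := lt_of_le_of_lt (hanti (by linarith [hq2.2] : p - δ₂ ≤ q)) hδ₂'
  rw [Real.dist_eq, abs_sub_lt_iff]
  constructor <;> linarith

variable {H F : ℝ → ℝ}

variable {H F : ℝ → ℝ}

lemma subR_nonempty (H F : ℝ → ℝ) (p : ℝ) : ((fun q => min (F q) (H q)) '' Ici p).Nonempty :=
  ⟨_, mem_image_of_mem _ self_mem_Ici⟩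
lemma supR_nonempty (H F : ℝ → ℝ) (p : ℝ) : ((fun q => max (F q) (H q)) '' Iic p).Nonempty :=
  ⟨_, mem_image_of_mem _ self_mem_Iic⟩
lemma bddAbove_sub (hFa : Antitone F) (p : ℝ) :
    BddAbove ((fun q => min (F q) (H q)) '' Ici p) := by
  refine ⟨F p, ?_⟩; rintro x ⟨q, hq, rfl⟩; exact (min_le_left _ _).trans (hFa hq)
lemma bddBelow_sup (hFa : Antitone F) (p : ℝ) :
    BddBelow ((fun q => max (F q) (H q)) '' Iic p) := by
  refine ⟨F p, ?_⟩; rintro x ⟨q, hq, rfl⟩; exact (hFa hq).trans (le_max_left _ _)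
lemma subR_le (hFa : Antitone F) (p : ℝ) : subR H F p ≤ F p :=
  csSup_le (subR_nonempty H F p) (by rintro x ⟨q, hq, rfl⟩; exact (min_le_left _ _).trans (hFa hq))
lemma le_subR (hFa : Antitone F) (p : ℝ) : min (F p) (H p) ≤ subR H F p :=
  le_csSup (bddAbove_sub hFa p) (mem_image_of_mem _ self_mem_Ici)
lemma le_supR (hFa : Antitone F) (p : ℝ) : F p ≤ supR H F p :=
  le_csInf (supR_nonempty H F p) (by rintro x ⟨q, hq, rfl⟩; exact (hFa hq).trans (le_max_left _ _))
lemma supR_le (hFa : Antitone F) (p : ℝ) : supR H F p ≤ max (F p) (H p) :=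
  csInf_le (bddBelow_sup hFa p) (mem_image_of_mem _ self_mem_Iic)
lemma subR_anti (hFa : Antitone F) : Antitone (subR H F) := fun p q hpq =>
  csSup_le_csSup (bddAbove_sub hFa p) (subR_nonempty H F q)
    (image_mono (Ici_subset_Ici.2 hpq))
lemma supR_anti (hFa : Antitone F) : Antitone (supR H F) := fun p q hpq =>
  csInf_le_csInf (bddBelow_sup hFa q) (supR_nonempty H F p)
    (image_mono (Iic_subset_Iic.2 hpq))
lemma ivt_cross (hH : Continuous H) (hF : Continuous F) {p q : ℝ} (hpq : p ≤ q)
    (h1 : H p ≤ F p) (h2 : F q ≤ H q) : ∃ r, p ≤ r ∧ r ≤ q ∧ F r = H r := by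
  have hc : ContinuousOn (fun x => F x - H x) (Icc p q) := (hF.sub hH).continuousOn
  have h0 : (0:ℝ) ∈ Icc (F q - H q) (F p - H p) := ⟨by linarith, by linarith⟩
  obtain ⟨r, hr, hr0⟩ := intermediate_value_Icc' hpq hc h0
  simp only at hr0
  exact ⟨r, hr.1, hr.2, by linarith⟩
lemma supR_le_subR (hH : Continuous H) (hF : Continuous F) (hFa : Antitone F)
    {a b : ℝ} (hab : a ≤ b) (h1 : H a ≤ F a) (h2 : F b ≤ H b) :
    supR H F b ≤ subR H F a := by
  obtain ⟨r, hra, hrb, hr⟩ := ivt_cross hH hF hab h1 h2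
  have e1 : supR H F b ≤ max (F r) (H r) := csInf_le (bddBelow_sup hFa b) (mem_image_of_mem _ hrb)
  have e2 : min (F r) (H r) ≤ subR H F a := le_csSup (bddAbove_sub hFa a) (mem_image_of_mem _ hra)
  rw [hr, max_self] at e1
  rw [hr, min_self] at e2
  exact e1.trans e2

lemma comp_sup_sub (hH : Continuous H) (hF : Continuous F) (hFa : Antitone F) :
    relax H F = supR H (subR H F) := by
  funext p
  have hSa : Antitone (subR H F) := subR_anti hFa
  unfold relax
  split_ifs with h
  · apply le_antisymm
    · refine le_csInf (supR_nonempty H (subR H F) p) ?_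
      rintro x ⟨q, hq, rfl⟩
      exact (hSa (mem_Iic.mp hq)).trans (le_max_left _ _)
    · have h1 : H p ≤ subR H F p := by
        have h2 := le_subR (H := H) hFa p
        rwa [min_eq_right h] at h2
      calc supR H (subR H F) p ≤ max (subR H F p) (H p) := supR_le hSa p
        _ = subR H F p := max_eq_left h1
  · push_neg at h
    apply le_antisymm
    · refine le_csInf (supR_nonempty H (subR H F) p) ?_
      rintro x ⟨q, hq, rfl⟩
      by_cases hq2 : H q ≤ F q
      · exact (supR_le_subR hH hF hFa (mem_Iic.mp hq) hq2 h.le).trans (le_max_left _ _)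
      · push_neg at hq2
        have e : supR H F p ≤ max (F q) (H q) :=
          csInf_le (bddBelow_sup hFa p) (mem_image_of_mem _ hq)
        calc supR H F p ≤ max (F q) (H q) := e
          _ = H q := max_eq_right hq2.le
          _ ≤ max (subR H F q) (H q) := le_max_right _ _
    · refine le_csInf (supR_nonempty H F p) ?_
      rintro x ⟨q, hq, rfl⟩
      calc supR H (subR H F) p ≤ max (subR H F q) (H q) :=
            csInf_le (bddBelow_sup hSa p) (mem_image_of_mem _ hq)
        _ ≤ max (F q) (H q) := max_le_max (subR_le hFa q) le_rfl

lemma comp_sub_sup (hH : Continuous H) (hF : Continuous F) (hFa : Antitone F) :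
    relax H F = subR H (supR H F) := by
  funext p
  have hIa : Antitone (supR H F) := supR_anti hFa
  unfold relax
  split_ifs with h
  · apply le_antisymm
    · refine csSup_le (subR_nonempty H F p) ?_
      rintro x ⟨q, hq, rfl⟩
      calc min (F q) (H q) ≤ min (supR H F q) (H q) :=
            min_le_min (le_supR hFa q) le_rfl
        _ ≤ subR H (supR H F) p := le_csSup (bddAbove_sub hIa p) (mem_image_of_mem _ hq)
    · refine csSup_le (subR_nonempty H (supR H F) p) ?_
      rintro x ⟨q, hq, rfl⟩
      by_cases hq2 : H q ≤ F q
      · calc min (supR H F q) (H q) ≤ H q := min_le_right _ _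
          _ = min (F q) (H q) := (min_eq_right hq2).symm
          _ ≤ subR H F p := le_csSup (bddAbove_sub hFa p) (mem_image_of_mem _ hq)
      · push_neg at hq2
        exact (min_le_left _ _).trans (supR_le_subR hH hF hFa (mem_Ici.mp hq) h hq2.le)
  · push_neg at h
    apply le_antisymm
    · have h1 : supR H F p ≤ H p := by
        have h2 := supR_le (H := H) hFa p
        rwa [max_eq_right h.le] at h2
      have : min (supR H F p) (H p) = supR H F p := min_eq_left h1
      calc supR H F p = min (supR H F p) (H p) := this.symm
        _ ≤ subR H (supR H F) p := le_subR hIa p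
    · refine csSup_le (subR_nonempty H (supR H F) p) ?_
      rintro x ⟨q, hq, rfl⟩
      exact (min_le_left _ _).trans (hIa (mem_Ici.mp hq))



theorem my_comp1 (hH : Continuous H) (hF : Continuous F) (hFa : Antitone F) :
    relax H F = supR H (subR H F) := comp_sup_sub hH hF hFa

end MyAux

/-- The relaxation operator is well-defined, continuous, non-increasing, semi-coercive,
and equals both compositions of the semi-relaxations. -/
theorem relax_well_defined_and_compositions (H F0 : ℝ → ℝ)
    (hH : Continuous H) (hHc : Coercive H)
    (hF : Continuous F0) (hFa : Antitone F0) (hFs : SemiCoercive F0) :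
    (∀ p : ℝ, F0 p = H p → subR H F0 p = F0 p ∧ supR H F0 p = F0 p) ∧
    Continuous (relax H F0) ∧ Antitone (relax H F0) ∧ SemiCoercive (relax H F0) ∧
    relax H F0 = supR H (subR H F0) ∧ relax H F0 = subR H (supR H F0) := by
  have hSa : Antitone (subR H F0) := subR_anti hFa
  have hcomp1 : relax H F0 = supR H (subR H F0) := comp_sup_sub hH hF hFa
  have hcomp2 : relax H F0 = subR H (supR H F0) := comp_sub_sup hH hF hFa
  refine ⟨?_, ?_, ?_, ?_, hcomp1, hcomp2⟩
  · intro p hp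
    constructor
    · refine le_antisymm (subR_le hFa p) ?_
      have h1 := le_subR (H := H) hFa p
      rwa [min_eq_left hp.le] at h1
    · refine le_antisymm ?_ (le_supR hFa p)
      have h1 := supR_le (H := H) hFa p
      rwa [max_eq_left hp.ge] at h1
  · rw [hcomp1]
    have hS : Continuous (subR H F0) :=
      cont_sSup_Ici (fun q => min (F0 q) (H q)) (hF.min hH) (fun p => bddAbove_sub hFa p)
    exact cont_sInf_Iic (fun q => max (subR H F0 q) (H q)) (hS.max hH)
      (fun p => bddBelow_sup hSa p)
  · rw [hcomp1]; exact supR_anti hSa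
  · have hHb : Tendsto H atBot atTop :=
      Tendsto.mono_left hHc (by rw [cocompact_eq_atBot_atTop]; exact le_sup_left)
    have hmin : Tendsto (fun p => min (F0 p) (H p)) atBot atTop := by
      rw [tendsto_atTop]
      intro b
      filter_upwards [tendsto_atTop.1 hFs b, tendsto_atTop.1 hHb b] with x h1 h2
      exact le_min h1 h2
    refine tendsto_atTop_mono (fun p => ?_) hmin
    unfold relax
    split_ifs with h
    · exact le_subR hFa p
    · exact (min_le_left _ _).trans (le_supR hFa p)
end
end

section
/- Let H : ℝ → ℝ be continuous and coercive and F0 : ℝ → ℝ be continuous, non-increasing and semi-coercive. Then the characteristic points of the relaxed function coincide with the limiter points of F0: χ⁺(ℜF0) = A⁺_{F0} and χ⁻(ℜF0) = A⁻_{F0}. -/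
open Set Filter

attribute [local instance] Classical.propDecidable

noncomputable section

section AuxLemmas

variable {H F0 : ℝ → ℝ}

/-- A continuous coercive function is bounded below. -/
lemma exists_lb (hH : Continuous H) (hHc : Coercive H) : ∃ c, ∀ x, c ≤ H x := by
  have h0 : ∀ᶠ x in cocompact ℝ, (0:ℝ) ≤ H x := hHc.eventually (eventually_ge_atTop 0)
  obtain ⟨K, hK, hKs⟩ := mem_cocompact.mp h0
  rcases K.eq_empty_or_nonempty with h | _
  · exact ⟨0, fun x => hKs (by simp [h])⟩
  · obtain ⟨c, hc⟩ := hK.bddBelow_image hH.continuousOn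
    refine ⟨min c 0, fun x => ?_⟩
    by_cases hx : x ∈ K
    · exact le_trans (min_le_left _ _) (hc ⟨x, hx, rfl⟩)
    · exact le_trans (min_le_right _ _) (hKs hx)

lemma coercive_atBot (hHc : Coercive H) (c : ℝ) : ∃ M, ∀ x ≤ M, c ≤ H x := by
  have h : Tendsto H atBot atTop :=
    hHc.mono_left (by rw [cocompact_eq_atBot_atTop]; exact le_sup_left)
  exact eventually_atBot.mp (h.eventually (eventually_ge_atTop c))

lemma Bset_bddBelow (hHc : Coercive H) (x : ℝ) :
    BddBelow {q : ℝ | q < x ∧ ∀ r ∈ Ioo q x, H r < H x} := by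
  obtain ⟨M, hM⟩ := coercive_atBot hHc (H x)
  refine ⟨min M x - 1, fun s hs => ?_⟩
  by_contra h
  push_neg at h
  have hr : min M x - 1 ∈ Ioo s x := ⟨h, by have := min_le_right M x; linarith⟩
  have := hs.2 _ hr
  have : H x ≤ H (min M x - 1) := hM _ (by have := min_le_left M x; linarith)
  linarith [hs.2 _ hr]

lemma lowerPt_le (hHc : Coercive H) (x : ℝ) : lowerPt H x ≤ x := by
  unfold lowerPt
  split_ifs with h
  · exact le_rfl
  · push_neg at h
    obtain ⟨ε, hε, hq⟩ := h
    have hmem : x - ε ∈ {q : ℝ | q < x ∧ ∀ r ∈ Ioo q x, H r < H x} :=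
      ⟨by linarith, fun r hr => hq r hr.1 hr.2⟩
    exact le_trans (csInf_le (Bset_bddBelow hHc x) hmem) (by linarith)

/-- If `H < H x` strictly on a left neighborhood, then `lowerPt H x ≤ x - ε`. -/
lemma lowerPt_le_of_dec (hHc : Coercive H) {x ε : ℝ} (hε : 0 < ε)
    (hdec : ∀ t ∈ Ioo (x - ε) x, H t < H x) : lowerPt H x ≤ x - ε := by
  unfold lowerPt
  rw [if_neg]
  · exact csInf_le (Bset_bddBelow hHc x) ⟨by linarith, hdec⟩
  · intro h
    obtain ⟨q, hq1, hq2, hq3⟩ := h ε hε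
    exact absurd hq3 (not_le.mpr (hdec q ⟨hq1, hq2⟩))


lemma leftDec_of_lowerPt_lt {x : ℝ} (h : lowerPt H x < x) :
    ∃ ε > 0, ∀ t ∈ Ioo (x - ε) x, H t < H x := by
  by_cases hc : ∀ ε > 0, ∃ q, x - ε < q ∧ q < x ∧ H x ≤ H q
  · exfalso; rw [lowerPt, if_pos hc] at h; exact lt_irrefl _ h
  · push_neg at hc
    obtain ⟨ε, hε, hq⟩ := hc
    exact ⟨ε, hε, fun t ht => hq t ht.1 ht.2⟩

/-- Extraction: if `lowerPt H x < r < x` then some `s < r` has `H < H x` on `(s, x)`. -/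
lemma lowerPt_extract {x r : ℝ} (h : lowerPt H x < r) (hrx : r < x) :
    ∃ s < r, s < x ∧ ∀ t ∈ Ioo s x, H t < H x := by
  by_cases hc : ∀ ε > 0, ∃ q, x - ε < q ∧ q < x ∧ H x ≤ H q
  · exfalso; rw [lowerPt, if_pos hc] at h; linarith
  · rw [lowerPt, if_neg hc] at h
    push_neg at hc
    obtain ⟨ε, hε, hq⟩ := hc
    set B := {q : ℝ | q < x ∧ ∀ t ∈ Ioo q x, H t < H x} with hB
    have hne : B.Nonempty := ⟨x - ε, by simp only [hB, mem_setOf_eq]; exact ⟨by linarith, fun t ht => hq t ht.1 ht.2⟩⟩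
    have hex : ∃ b ∈ B, b < r := by
      by_cases hbd : BddBelow B
      · by_contra hno
        push_neg at hno
        exact absurd (le_csInf hne hno) (not_le.mpr h)
      · obtain ⟨b, hb, hbr⟩ := not_bddBelow_iff.mp hbd r
        exact ⟨b, hb, hbr⟩
    obtain ⟨b, hb, hbr⟩ := hex
    exact ⟨b, hbr, hb.1, hb.2⟩

lemma le_upperPt (x : ℝ) : (x : EReal) ≤ upperPt H x := by
  unfold upperPt
  split_ifs with h
  · exact le_rfl
  · push_neg at h
    obtain ⟨ε, hε, hq⟩ := h
    have hmem : x + ε ∈ {q : ℝ | x < q ∧ ∀ r ∈ Ioo x q, H x < H r} :=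
      ⟨by linarith, fun r hr => hq r hr.1 hr.2⟩
    refine le_trans ?_ (le_sSup ⟨x + ε, hmem, rfl⟩)
    show (x : EReal) ≤ ((x + ε : ℝ) : EReal)
    exact_mod_cast (by linarith : x ≤ x + ε)

/-- If `H > H x` strictly on `(x, x+ε)` then `x + ε ≤ upperPt H x`. -/
lemma le_upperPt_of_inc {x ε : ℝ} (hε : 0 < ε)
    (hinc : ∀ t ∈ Ioo x (x + ε), H x < H t) : ((x + ε : ℝ) : EReal) ≤ upperPt H x := by
  unfold upperPt
  rw [if_neg]
  · exact le_sSup ⟨x + ε, ⟨by linarith, hinc⟩, rfl⟩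
  · intro h
    obtain ⟨q, hq1, hq2, hq3⟩ := h ε hε
    exact absurd hq3 (not_le.mpr (hinc q ⟨hq1, hq2⟩))

lemma rightInc_of_upperPt_gt {x : ℝ} (h : (x : EReal) < upperPt H x) :
    ∃ ε > 0, ∀ t ∈ Ioo x (x + ε), H x < H t := by
  by_cases hc : ∀ ε > 0, ∃ q, x < q ∧ q < x + ε ∧ H q ≤ H x
  · exfalso; rw [upperPt, if_pos hc] at h; exact lt_irrefl _ h
  · push_neg at hc
    obtain ⟨ε, hε, hq⟩ := hc
    exact ⟨ε, hε, fun t ht => hq t ht.1 ht.2⟩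

/-- Extraction: if `x < r` and `(r : EReal) < upperPt H x` then some `t > r` has
`H > H x` on `(x, t)`. -/
lemma upperPt_extract {x r : ℝ} (h : (r : EReal) < upperPt H x) (hxr : x < r) :
    ∃ t, r < t ∧ ∀ s ∈ Ioo x t, H x < H s := by
  by_cases hc : ∀ ε > 0, ∃ q, x < q ∧ q < x + ε ∧ H q ≤ H x
  · exfalso; rw [upperPt, if_pos hc] at h
    exact absurd (lt_trans (by exact_mod_cast hxr) h) (lt_irrefl _)
  · rw [upperPt, if_neg hc] at h
    by_contra hcon
    push_neg at hcon
    have : sSup ((fun q : ℝ => (q : EReal)) '' {q : ℝ | x < q ∧ ∀ s ∈ Ioo x q, H x < H s})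
        ≤ (r : EReal) := by
      apply sSup_le
      rintro _ ⟨t, ⟨ht1, ht2⟩, rfl⟩
      by_contra hle
      push_neg at hle
      have hrt : r < t := by exact_mod_cast hle
      obtain ⟨s, hs, hHs⟩ := hcon t hrt
      exact absurd (ht2 s hs) (not_lt.mpr hHs)
    exact absurd (lt_of_lt_of_le h this) (lt_irrefl _)

lemma subR_bddAbove (hFa : Antitone F0) (p : ℝ) :
    BddAbove ((fun q => min (F0 q) (H q)) '' Ici p) := by
  refine ⟨F0 p, ?_⟩
  rintro _ ⟨q, hq, rfl⟩
  exact le_trans (min_le_left _ _) (hFa hq)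

lemma supR_bddBelow (hH : Continuous H) (hHc : Coercive H) (p : ℝ) :
    BddBelow ((fun q => max (F0 q) (H q)) '' Iic p) := by
  obtain ⟨c, hc⟩ := exists_lb hH hHc
  refine ⟨c, ?_⟩
  rintro _ ⟨q, _, rfl⟩
  exact le_trans (hc q) (le_max_right _ _)

/-- Characterization of positive characteristic points of the relaxed function. -/
lemma posChar_relax_iff (hH : Continuous H) (hHc : Coercive H) (hF : Continuous F0)
    (hFa : Antitone F0) (p : ℝ) :
    posChar H (relax H F0) p ↔
      ((∃ ε > 0, ∀ t ∈ Ioo p (p + ε), H p < H t) ∧ F0 p ≤ H p ∧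
        ∀ q ≤ p, H p ≤ max (F0 q) (H q)) := by
  constructor
  · rintro ⟨hEq, ε, hε, hinc⟩
    have hFle : F0 p ≤ H p := by
      by_contra hc
      push_neg at hc
      have hrelax : relax H F0 p = subR H F0 p := if_pos (le_of_lt hc)
      have hU : IsOpen (F0 ⁻¹' Ioi (H p)) := isOpen_Ioi.preimage hF
      obtain ⟨δ, hδ, hball⟩ := Metric.isOpen_iff.mp hU p hc
      have hm : 0 < min ε δ := lt_min hε hδ
      set t := p + min ε δ / 2 with ht
      have htmem : t ∈ Ioo p (p + ε) := by
        constructor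
        · simp only [ht]; linarith
        · simp only [ht]; have := min_le_left ε δ; linarith
      have htb : t ∈ Metric.ball p δ := by
        rw [Metric.mem_ball, Real.dist_eq]
        have : t - p = min ε δ / 2 := by simp [ht]
        rw [this, abs_of_pos (by linarith)]
        have := min_le_right ε δ; linarith
      have hF0t : H p < F0 t := hball htb
      have hHt : H p < H t := hinc t htmem
      have hle : min (F0 t) (H t) ≤ subR H F0 p :=
        le_csSup (subR_bddAbove hFa p) ⟨t, le_of_lt htmem.1, rfl⟩
      have : H p < min (F0 t) (H t) := lt_min hF0t hHt
      rw [hrelax] at hEq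
      linarith
    refine ⟨⟨ε, hε, hinc⟩, hFle, ?_⟩
    rcases eq_or_lt_of_le hFle with heq | hlt
    · intro q hq
      exact le_trans (heq.symm.le.trans (hFa hq)) (le_max_left _ _)
    · intro q hq
      have hrelax : relax H F0 p = supR H F0 p := if_neg (not_le.mpr hlt)
      rw [hrelax] at hEq
      calc H p = supR H F0 p := hEq
      _ ≤ max (F0 q) (H q) := csInf_le (supR_bddBelow hH hHc p) ⟨q, hq, rfl⟩
  · rintro ⟨⟨ε, hε, hinc⟩, hFle, hkey⟩
    have hEq : relax H F0 p = H p := by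
      rcases eq_or_lt_of_le hFle with heq | hlt
      · rw [relax, if_pos heq.ge]
        apply le_antisymm
        · apply csSup_le (nonempty_Ici.image _)
          rintro _ ⟨q, hq, rfl⟩
          exact le_trans (min_le_left _ _) ((hFa hq).trans heq.le)
        · have : min (F0 p) (H p) = H p := min_eq_right heq.ge
          exact this ▸ le_csSup (subR_bddAbove hFa p) ⟨p, le_refl p, rfl⟩
      · rw [relax, if_neg (not_le.mpr hlt)]
        apply le_antisymm
        · have : max (F0 p) (H p) = H p := max_eq_right hFle
          exact this ▸ csInf_le (supR_bddBelow hH hHc p) ⟨p, le_refl p, rfl⟩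
        · apply le_csInf (nonempty_Iic.image _)
          rintro _ ⟨q, hq, rfl⟩
          exact hkey q hq
    exact ⟨hEq.symm, ε, hε, hinc⟩

/-- Characterization of negative characteristic points of the relaxed function. -/
lemma negChar_relax_iff (hH : Continuous H) (hHc : Coercive H) (hF : Continuous F0)
    (hFa : Antitone F0) (p : ℝ) :
    negChar H (relax H F0) p ↔
      ((∃ ε > 0, ∀ t ∈ Ioo (p - ε) p, H t < H p) ∧ H p ≤ F0 p ∧
        ∀ q, p ≤ q → min (F0 q) (H q) ≤ H p) := by
  constructor
  · rintro ⟨hEq, ε, hε, hdec⟩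
    have hHle : H p ≤ F0 p := by
      by_contra hc
      push_neg at hc
      have hrelax : relax H F0 p = supR H F0 p := if_neg (not_le.mpr hc)
      have hU : IsOpen (F0 ⁻¹' Iio (H p)) := isOpen_Iio.preimage hF
      obtain ⟨δ, hδ, hball⟩ := Metric.isOpen_iff.mp hU p hc
      have hm : 0 < min ε δ := lt_min hε hδ
      set t := p - min ε δ / 2 with ht
      have htmem : t ∈ Ioo (p - ε) p := by
        constructor
        · simp only [ht]; have := min_le_left ε δ; linarith
        · simp only [ht]; linarith
      have htb : t ∈ Metric.ball p δ := by
        rw [Metric.mem_ball, Real.dist_eq]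
        have : t - p = -(min ε δ / 2) := by simp [ht]
        rw [this, abs_neg, abs_of_pos (by linarith)]
        have := min_le_right ε δ; linarith
      have hF0t : F0 t < H p := hball htb
      have hHt : H t < H p := hdec t htmem
      have hle : supR H F0 p ≤ max (F0 t) (H t) :=
        csInf_le (supR_bddBelow hH hHc p) ⟨t, le_of_lt htmem.2, rfl⟩
      have : max (F0 t) (H t) < H p := max_lt hF0t hHt
      rw [hrelax] at hEq
      linarith
    refine ⟨⟨ε, hε, hdec⟩, hHle, ?_⟩
    rcases eq_or_lt_of_le hHle with heq | hlt
    · intro q hq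
      exact le_trans (min_le_left _ _) ((hFa hq).trans heq.symm.le)
    · intro q hq
      have hrelax : relax H F0 p = subR H F0 p := if_pos hHle
      rw [hrelax] at hEq
      calc min (F0 q) (H q) ≤ subR H F0 p :=
            le_csSup (subR_bddAbove hFa p) ⟨q, hq, rfl⟩
      _ = H p := hEq.symm
  · rintro ⟨⟨ε, hε, hdec⟩, hHle, hkey⟩
    have hEq : relax H F0 p = H p := by
      rw [relax, if_pos hHle]
      apply le_antisymm
      · apply csSup_le (nonempty_Ici.image _)
        rintro _ ⟨q, hq, rfl⟩
        exact hkey q hq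
      · have : min (F0 p) (H p) = H p := min_eq_right hHle
        exact this ▸ le_csSup (subR_bddAbove hFa p) ⟨p, le_refl p, rfl⟩
    exact ⟨hEq.symm, ε, hε, hdec⟩

/-- The key property implies the disjointness condition in `posLimiter`. -/
lemma pos_disj {p : ℝ} (hkey : ∀ q ≤ p, H p ≤ max (F0 q) (H q)) :
    ∀ q : ℝ, H q < H p → F0 q ≤ H q →
      {r : ℝ | lowerPt H q < r ∧ (r : EReal) < upperPt H q} ∩
        {r : ℝ | p < r ∧ (r : EReal) < upperPt H p} = ∅ := by
  intro q hq1 hq2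
  rw [Set.eq_empty_iff_forall_notMem]
  rintro r ⟨⟨hql, hqu⟩, hpl, hpu⟩
  rcases le_or_gt q p with hqp | hqp
  · have := hkey q hqp
    rw [max_eq_right hq2] at this
    linarith
  · obtain ⟨t, hrt, ht⟩ := upperPt_extract hpu hpl
    have hHr : H p < H r := ht r ⟨hpl, hrt⟩
    rcases le_or_gt q r with hqr | hqr
    · exact absurd (ht q ⟨hqp, lt_of_le_of_lt hqr hrt⟩) (not_lt.mpr hq1.le)
    · obtain ⟨s, hsr, _, hs⟩ := lowerPt_extract hql hqr
      have : H r < H q := hs r ⟨hsr, hqr⟩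
      linarith

/-- The key property implies the disjointness condition in `negLimiter`. -/
lemma neg_disj {p : ℝ} (hkey : ∀ q, p ≤ q → min (F0 q) (H q) ≤ H p) :
    ∀ q : ℝ, H q ≤ F0 q → H p < H q →
      {r : ℝ | lowerPt H q < r ∧ (r : EReal) < upperPt H q} ∩ Ioo (lowerPt H p) p = ∅ := by
  intro q hq1 hq2
  rw [Set.eq_empty_iff_forall_notMem]
  rintro r ⟨⟨hql, hqu⟩, hrl, hrp⟩
  rcases le_or_gt p q with hpq | hpq
  · have := hkey q hpq
    rw [min_eq_right hq1] at this
    linarith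
  · obtain ⟨s, hsr, _, hs⟩ := lowerPt_extract hrl hrp
    have hHr : H r < H p := hs r ⟨hsr, hrp⟩
    rcases lt_or_ge s q with hsq | hsq
    · exact absurd (hs q ⟨hsq, hpq⟩) (not_lt.mpr hq2.le)
    · have hqr : q < r := lt_of_le_of_lt hsq hsr
      obtain ⟨t, hrt, ht⟩ := upperPt_extract hqu hqr
      have : H q < H r := ht r ⟨hqr, hrt⟩
      linarith

/-- The disjointness condition implies the key property (positive side). -/
lemma pos_key (hH : Continuous H) (hHc : Coercive H) (hF : Continuous F0) (hFa : Antitone F0)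
    {p ε : ℝ} (hε : 0 < ε) (hinc : ∀ t ∈ Ioo p (p + ε), H p < H t)
    (hdisj : ∀ q : ℝ, H q < H p → F0 q ≤ H q →
      {r : ℝ | lowerPt H q < r ∧ (r : EReal) < upperPt H q} ∩
        {r : ℝ | p < r ∧ (r : EReal) < upperPt H p} = ∅) :
    ∀ q ≤ p, H p ≤ max (F0 q) (H q) := by
  intro q hq
  by_contra hc
  push_neg at hc
  have hqp : q < p := by
    rcases lt_or_eq_of_le hq with h | h
    · exact h
    · exact absurd hc (by rw [h]; exact not_lt.mpr (le_max_right _ _))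
  set φ : ℝ → ℝ := fun t => max (F0 t) (H t) with hφ
  have hφc : Continuous φ := hF.max hH
  obtain ⟨t0, ht0m, ht0min⟩ :=
    isCompact_Icc.exists_isMinOn ⟨q, left_mem_Icc.mpr hq⟩ hφc.continuousOn
  set μ := φ t0 with hμdef
  have hμ : μ < H p := lt_of_le_of_lt (ht0min (left_mem_Icc.mpr hq)) hc
  set K := Icc q p ∩ φ ⁻¹' {μ} with hK
  have hKc : IsCompact K := isCompact_Icc.inter_right (isClosed_singleton.preimage hφc)
  have hKne : K.Nonempty := ⟨t0, ht0m, rfl⟩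
  set q' := sSup K with hq'def
  have hq'K : q' ∈ K := hKc.sSup_mem hKne
  have hq'I : q' ∈ Icc q p := hq'K.1
  have hφq' : φ q' = μ := hq'K.2
  have hq'p : q' < p := by
    rcases lt_or_eq_of_le hq'I.2 with h | h
    · exact h
    · exfalso
      have h2 : H p ≤ μ := by rw [← hφq', h]; exact le_max_right _ _
      linarith
  have hlast : ∀ t ∈ Ioc q' p, μ < φ t := by
    intro t ht
    have htI : t ∈ Icc q p := ⟨le_trans hq'I.1 ht.1.le, ht.2⟩
    rcases lt_or_eq_of_le (show μ ≤ φ t from ht0min htI) with h | h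
    · exact h
    · exact absurd (le_csSup hKc.bddAbove ⟨htI, h.symm⟩) (not_le.mpr ht.1)
  have hmaxH : ∀ t, F0 t < φ t → φ t = H t := by
    intro t h
    rcases max_cases (F0 t) (H t) with ⟨h1, _⟩ | ⟨h1, _⟩
    · have h2 : φ t = F0 t := h1
      rw [h2] at h
      exact absurd h (lt_irrefl _)
    · exact h1
  have hF0H : F0 q' ≤ H q' := by
    by_contra hcc
    push_neg at hcc
    have hφF : F0 q' = μ := by rw [← hφq']; exact (max_eq_left hcc.le).symm
    have hHt : ∀ t ∈ Ioo q' p, μ ≤ H t := by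
      intro t ht
      have h1 : F0 t ≤ μ := hφF ▸ hFa ht.1.le
      have h2 := hlast t ⟨ht.1, ht.2.le⟩
      rw [← hmaxH t (lt_of_le_of_lt h1 h2)]
      exact h2.le
    have hge : μ ≤ H q' := by
      have htd : Tendsto H (nhdsWithin q' (Ioi q')) (nhds (H q')) :=
        (hH.tendsto q').mono_left nhdsWithin_le_nhds
      refine ge_of_tendsto htd ?_
      filter_upwards [Ioo_mem_nhdsGT_of_mem (left_mem_Ico.mpr hq'p)] with t ht
      exact hHt t ht
    rw [hφF] at hcc
    linarith
  have hμH : H q' ≤ μ := hφq' ▸ le_max_right _ _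
  have hmono : ∀ t ∈ Ioc q' p, H q' < H t := by
    intro t ht
    have h1 : F0 t ≤ μ := le_trans (hFa ht.1.le) (le_trans hF0H hμH)
    have h2 := hlast t ht
    have h3 := hmaxH t (lt_of_le_of_lt h1 h2)
    rw [← h3]
    linarith
  have hq'Hp : H q' < H p := lt_of_le_of_lt hμH hμ
  have hdisj' := hdisj q' hq'Hp hF0H
  have hr : p + ε / 2 ∈ {r : ℝ | lowerPt H q' < r ∧ (r : EReal) < upperPt H q'} ∩
      {r : ℝ | p < r ∧ (r : EReal) < upperPt H p} := by
    refine ⟨⟨?_, ?_⟩, ?_, ?_⟩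
    · exact lt_of_le_of_lt (lowerPt_le hHc q') (by linarith)
    · have hinc' : ∀ t ∈ Ioo q' (q' + (p + ε - q')), H q' < H t := by
        intro t ht
        have ht2 : t < p + ε := by have := ht.2; linarith
        rcases le_or_gt t p with h | h
        · exact hmono t ⟨ht.1, h⟩
        · exact lt_trans hq'Hp (hinc t ⟨h, ht2⟩)
      have hle := le_upperPt_of_inc (by linarith : (0:ℝ) < p + ε - q') hinc'
      have h2 : q' + (p + ε - q') = p + ε := by ring
      rw [h2] at hle
      refine lt_of_lt_of_le ?_ hle
      exact_mod_cast (by linarith : p + ε / 2 < p + ε)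
    · show p < p + ε / 2
      linarith
    · have hle := le_upperPt_of_inc hε hinc
      refine lt_of_lt_of_le ?_ hle
      exact_mod_cast (by linarith : p + ε / 2 < p + ε)
  rw [hdisj'] at hr
  exact hr

/-- The disjointness condition implies the key property (negative side). -/
lemma neg_key (hH : Continuous H) (hHc : Coercive H) (hF : Continuous F0) (hFa : Antitone F0)
    {p ε : ℝ} (hε : 0 < ε) (hdec : ∀ t ∈ Ioo (p - ε) p, H t < H p)
    (hHle : H p ≤ F0 p)
    (hdisj : ∀ q : ℝ, H q ≤ F0 q → H p < H q →
      {r : ℝ | lowerPt H q < r ∧ (r : EReal) < upperPt H q} ∩ Ioo (lowerPt H p) p = ∅) :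
    ∀ q, p ≤ q → min (F0 q) (H q) ≤ H p := by
  intro q hq
  by_contra hc
  push_neg at hc
  have hpq : p < q := by
    rcases lt_or_eq_of_le hq with h | h
    · exact h
    · exact absurd hc (by rw [← h]; exact not_lt.mpr (min_le_right _ _))
  set ψ : ℝ → ℝ := fun t => min (F0 t) (H t) with hψ
  have hψc : Continuous ψ := hF.min hH
  obtain ⟨t0, ht0m, ht0max⟩ :=
    isCompact_Icc.exists_isMaxOn ⟨q, right_mem_Icc.mpr hq⟩ hψc.continuousOn
  set μ := ψ t0 with hμdef
  have hμ : H p < μ := lt_of_lt_of_le hc (ht0max (right_mem_Icc.mpr hq))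
  set K := Icc p q ∩ ψ ⁻¹' {μ} with hK
  have hKc : IsCompact K := isCompact_Icc.inter_right (isClosed_singleton.preimage hψc)
  have hKne : K.Nonempty := ⟨t0, ht0m, rfl⟩
  set q' := sInf K with hq'def
  have hq'K : q' ∈ K := hKc.sInf_mem hKne
  have hq'I : q' ∈ Icc p q := hq'K.1
  have hψq' : ψ q' = μ := hq'K.2
  have hpq' : p < q' := by
    rcases lt_or_eq_of_le hq'I.1 with h | h
    · exact h
    · exfalso
      have h2 : μ = H p := by rw [← hψq', ← h]; exact min_eq_right hHle
      linarith
  have hfirst : ∀ t ∈ Ico p q', ψ t < μ := by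
    intro t ht
    have htI : t ∈ Icc p q := ⟨ht.1, le_trans ht.2.le hq'I.2⟩
    rcases lt_or_eq_of_le (show ψ t ≤ μ from ht0max htI) with h | h
    · exact h
    · exact absurd (csInf_le hKc.bddBelow ⟨htI, h⟩) (not_le.mpr ht.2)
  have hminH : ∀ t, ψ t < F0 t → ψ t = H t := by
    intro t h
    rcases min_cases (F0 t) (H t) with ⟨h1, _⟩ | ⟨h1, _⟩
    · have h2 : ψ t = F0 t := h1
      rw [h2] at h
      exact absurd h (lt_irrefl _)
    · exact h1
  have hHF : H q' ≤ F0 q' := by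
    by_contra hcc
    push_neg at hcc
    have hψF : F0 q' = μ := by rw [← hψq']; exact (min_eq_left hcc.le).symm
    have hHt : ∀ t ∈ Ioo p q', H t ≤ μ := by
      intro t ht
      have h1 : μ ≤ F0 t := hψF ▸ hFa ht.2.le
      have h2 := hfirst t ⟨ht.1.le, ht.2⟩
      rw [← hminH t (lt_of_lt_of_le h2 h1)]
      exact h2.le
    have hle : H q' ≤ μ := by
      have htd : Tendsto H (nhdsWithin q' (Iio q')) (nhds (H q')) :=
        (hH.tendsto q').mono_left nhdsWithin_le_nhds
      refine le_of_tendsto htd ?_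
      filter_upwards [Ioo_mem_nhdsLT_of_mem (right_mem_Ioc.mpr hpq')] with t ht
      exact hHt t ht
    rw [hψF] at hcc
    linarith
  have hμH : μ ≤ H q' := by
    rw [← hψq']
    exact min_le_right _ _
  have hmono : ∀ t ∈ Ico p q', H t < H q' := by
    intro t ht
    have h1 : μ ≤ F0 t := le_trans (le_trans hμH hHF) (hFa ht.2.le)
    have h2 := hfirst t ht
    have h3 := hminH t (lt_of_lt_of_le h2 h1)
    rw [← h3]
    linarith
  have hq'Hp : H p < H q' := lt_of_lt_of_le hμ hμH
  have hdisj' := hdisj q' hHF hq'Hp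
  have hr : p - ε / 2 ∈ {r : ℝ | lowerPt H q' < r ∧ (r : EReal) < upperPt H q'} ∩
      Ioo (lowerPt H p) p := by
    refine ⟨⟨?_, ?_⟩, ?_, ?_⟩
    · have hdec' : ∀ t ∈ Ioo (q' - (q' - (p - ε))) q', H t < H q' := by
        intro t ht
        rw [show q' - (q' - (p - ε)) = p - ε by ring] at ht
        rcases lt_or_ge t p with h | h
        · exact lt_trans (hdec t ⟨ht.1, h⟩) hq'Hp
        · exact hmono t ⟨h, ht.2⟩
      have hle := lowerPt_le_of_dec hHc (by linarith : (0:ℝ) < q' - (p - ε)) hdec'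
      have h2 : q' - (q' - (p - ε)) = p - ε := by ring
      rw [h2] at hle
      linarith
    · refine lt_of_lt_of_le ?_ (le_upperPt q')
      exact_mod_cast (by linarith : p - ε / 2 < q')
    · have hle := lowerPt_le_of_dec hHc hε hdec
      linarith
    · show p - ε / 2 < p
      linarith
  rw [hdisj'] at hr
  exact hr

end AuxLemmas

/-- Limiter points of `F0` coincide with characteristic points of the relaxed function. -/
theorem limiter_points_eq_characteristic_points (H F0 : ℝ → ℝ)
    (hH : Continuous H) (hHc : Coercive H)
    (hF : Continuous F0) (hFa : Antitone F0) (hFs : SemiCoercive F0) :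
    (∀ p : ℝ, posChar H (relax H F0) p ↔ posLimiter H F0 p) ∧
    (∀ p : ℝ, negChar H (relax H F0) p ↔ negLimiter H F0 p) := by
  constructor
  · intro p
    rw [posChar_relax_iff hH hHc hF hFa p]
    constructor
    · rintro ⟨⟨ε, hε, hinc⟩, hFle, hkey⟩
      refine ⟨?_, hFle, pos_disj hkey⟩
      refine lt_of_lt_of_le ?_ (le_upperPt_of_inc hε hinc)
      exact_mod_cast (by linarith : p < p + ε)
    · rintro ⟨hlt, hFle, hdisj⟩
      obtain ⟨ε, hε, hinc⟩ := rightInc_of_upperPt_gt hlt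
      exact ⟨⟨ε, hε, hinc⟩, hFle, pos_key hH hHc hF hFa hε hinc hdisj⟩
  · intro p
    rw [negChar_relax_iff hH hHc hF hFa p]
    constructor
    · rintro ⟨⟨ε, hε, hdec⟩, hHle, hkey⟩
      refine ⟨?_, hHle, neg_disj hkey⟩
      have := lowerPt_le_of_dec hHc hε hdec
      linarith
    · rintro ⟨hlt, hHle, hdisj⟩
      obtain ⟨ε, hε, hdec⟩ := leftDec_of_lowerPt_lt hlt
      exact ⟨⟨ε, hε, hdec⟩, hHle, neg_key hH hHc hF hFa hε hdec hHle hdisj⟩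
end
end
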